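/- Let k ≥ 1, let B be a binary de Bruijn sequence of order k, and let T = φ(B), where φ(0) = abababaabaababa and φ(1) = abababaababaaba. If T' is a string over {a,b} with |T'| = |T| that differs from T in exactly one position, then T' is superprimitive, i.e., T' has no proper cover. (In this situation T' contains exactly one maximal run a^s with 3 ≤ s ≤ 5, or exactly one maximal run b^t with 2 ≤ t ≤ 3, whereas T contains no substring aaa and no substring bb.) -/

import Mathlib

section Defs

variable {α : Type*}

/-- `C` occurs in `T` at starting position `i`. -/
def OccursAt (C T : List α) (i : ℕ) : Prop :=
  i + C.length ≤ T.length ∧ (T.drop i).take C.length = C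

/-- `C` is a cover of `T`: `C` occurs in `T` and every position of `T`
lies within an occurrence of `C`. -/
def IsCover (C T : List α) : Prop :=
  (∃ i, OccursAt C T i) ∧
    ∀ q, q < T.length → ∃ i, OccursAt C T i ∧ i ≤ q ∧ q < i + C.length

/-- A border of `T` is both a prefix and a suffix of `T`. -/
def IsBorder (B T : List α) : Prop := B <+: T ∧ B <:+ T

/-- `p` is a period of `U`: `U[i] = U[i+p]` for all `0 ≤ i < |U| - p`. -/
def IsPeriod (p : ℕ) (U : List α) : Prop :=
  0 < p ∧ ∀ i, i + p < U.length → U[i]? = U[i + p]?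

/-- `U` is aperiodic: its smallest period `p` satisfies `2p > |U|`
(equivalently, every period `p` of `U` satisfies `2p > |U|`). -/
def StrAperiodic (U : List α) : Prop := ∀ p, IsPeriod p U → U.length < 2 * p

/-- A nonempty string `X` is primitive if `X = Y^t` implies `t = 1`. -/
def StrPrimitive (X : List α) : Prop :=
  X ≠ [] ∧ ∀ (Y : List α) (t : ℕ), X = (List.replicate t Y).flatten → t = 1

/-- A string is superprimitive if it has no proper cover. -/
def Superprimitive (T : List α) : Prop :=
  ¬ ∃ C : List α, IsCover C T ∧ C.length < T.length

/-- The length of the shortest cover of `T`. -/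
noncomputable def covLen (T : List α) : ℕ :=
  sInf {c | ∃ C : List α, C.length = c ∧ IsCover C T}

/-- `{a, a+p, ..., a+(t-1)p}` is a maximal arithmetic progression with
difference `p` inside the set `S`. -/
def MaxProg (S : Set ℕ) (p a t : ℕ) : Prop :=
  0 < t ∧ (∀ r, r < t → a + r * p ∈ S) ∧ (∀ b, b + p = a → b ∉ S) ∧ a + t * p ∉ S

end Defs

/-- The letter `a`. -/
def la : Bool := true
/-- The letter `b`. -/
def lb : Bool := false

/-- `φ(0) = abababa·aba·ababa`. -/
def phi0 : List Bool := [la,lb,la,lb,la,lb,la, la,lb,la, la,lb,la,lb,la]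
/-- `φ(1) = abababa·ababa·aba`. -/
def phi1 : List Bool := [la,lb,la,lb,la,lb,la, la,lb,la,lb,la, la,lb,la]

/-- The morphism `φ` on letters (`false` = 0, `true` = 1). -/
def phi (s : Bool) : List Bool := if s then phi1 else phi0

/-- `φ` applied letter by letter to a binary string. -/
def phiStr (S : List Bool) : List Bool := (S.map phi).flatten

/-- `B` is a binary de Bruijn sequence of order `k`: it has length `2^k + k - 1`
and every length-`k` binary string occurs in it exactly once. -/
def DeBruijn (k : ℕ) (B : List Bool) : Prop :=
  B.length = 2 ^ k + k - 1 ∧ ∀ W : List Bool, W.length = k → ∃! i, OccursAt W B i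

def pairP (x y : Bool) : List Bool := phi x ++ phi y

lemma phi_length (c : Bool) : (phi c).length = 15 := by cases c <;> rfl

lemma phiStr_cons (c : Bool) (B : List Bool) : phiStr (c :: B) = phi c ++ phiStr B := by
  simp [phiStr]

lemma phiStr_length (B : List Bool) : (phiStr B).length = 15 * B.length := by
  induction B with
  | nil => rfl
  | cons c B ih =>
    rw [phiStr_cons, List.length_append, phi_length, ih, List.length_cons]
    ring

lemma getElem?_append_left' {α : Type*} {l₁ l₂ : List α} {n : ℕ} (h : n < l₁.length) :
    (l₁ ++ l₂)[n]? = l₁[n]? := by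
  rw [List.getElem?_append, if_pos h]

lemma windows (B : List Bool) (s L : ℕ) (hL : L ≤ 16) (h : s + L ≤ (phiStr B).length) :
    ∃ x y : Bool, ∀ j, j < L → (phiStr B)[s + j]? = (pairP x y)[s % 15 + j]? := by
  induction B generalizing s with
  | nil =>
    refine ⟨true, true, fun j hj => absurd hj ?_⟩
    have h0 : (phiStr ([] : List Bool)).length = 0 := rfl
    omega
  | cons c B ih =>
    by_cases hs : 15 ≤ s
    · obtain ⟨x, y, hw⟩ := ih (s - 15) (by
        have h2 := phiStr_length (c :: B)
        have h1 := phiStr_length B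
        simp only [List.length_cons] at h2
        omega)
      refine ⟨x, y, fun j hj => ?_⟩
      have e : (phiStr (c :: B))[s + j]? = (phiStr B)[s - 15 + j]? := by
        rw [phiStr_cons, List.getElem?_append_right (by rw [phi_length]; omega),
          show s + j - (phi c).length = s - 15 + j by have := phi_length c; omega]
      rw [e, Nat.mod_eq_sub_mod hs]
      exact hw j hj
    · have hmod : s % 15 = s := Nat.mod_eq_of_lt (by omega)
      rw [hmod]
      cases B with
      | nil =>
        refine ⟨c, c, fun j hj => ?_⟩
        have h0 : (phiStr [c]).length = 15 := by simp [phiStr_length]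
        have hb : s + j < (phi c).length := by rw [phi_length]; omega
        rw [phiStr_cons, show phiStr ([] : List Bool) = [] from rfl, List.append_nil]
        unfold pairP
        rw [getElem?_append_left' hb]
      | cons d B' =>
        refine ⟨c, d, fun j hj => ?_⟩
        have hb : s + j < (phi c ++ phi d).length := by
          rw [List.length_append, phi_length, phi_length]; omega
        have e : phiStr (c :: d :: B') = (phi c ++ phi d) ++ phiStr B' := by
          rw [phiStr_cons, phiStr_cons, List.append_assoc]
        rw [e, getElem?_append_left' hb]
        rfl

lemma d_no_bb : ∀ (x y : Bool), ∀ r < 15,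
    ¬((pairP x y)[r]? = some lb ∧ (pairP x y)[r+1]? = some lb) := by decide

lemma d_no_aaa : ∀ (x y : Bool), ∀ r < 15,
    ¬((pairP x y)[r]? = some la ∧ (pairP x y)[r+1]? = some la ∧ (pairP x y)[r+2]? = some la) := by
  decide

lemma d_per : ∀ (x y : Bool), ∀ r < 15, ∀ p < 3, 1 ≤ p →
    ∃ j, j < 14 ∧ j + p < 14 ∧ ¬((pairP x y)[r + j]? = (pairP x y)[r + (j + p)]?) := by decide

lemma clash (o : Option Bool) (h1 : o = some la) (h2 : o = some lb) : False := by
  rw [h1] at h2; simp [la, lb] at h2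

lemma no_bb (B : List Bool) (i : ℕ) (h0 : (phiStr B)[i]? = some lb)
    (h1 : (phiStr B)[i+1]? = some lb) : False := by
  have hi : i + 1 < (phiStr B).length := by
    by_contra hcon
    rw [List.getElem?_eq_none (by omega)] at h1
    exact Option.some_ne_none _ h1.symm
  obtain ⟨x, y, hw⟩ := windows B i 2 (by omega) (by omega)
  have e0 := hw 0 (by omega)
  have e1 := hw 1 (by omega)
  simp only [Nat.add_zero] at e0
  rw [e0] at h0; rw [e1] at h1
  exact d_no_bb x y (i % 15) (Nat.mod_lt _ (by omega)) ⟨h0, h1⟩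

lemma no_aaa (B : List Bool) (i : ℕ) (h0 : (phiStr B)[i]? = some la)
    (h1 : (phiStr B)[i+1]? = some la) (h2 : (phiStr B)[i+2]? = some la) : False := by
  have hi : i + 2 < (phiStr B).length := by
    by_contra hcon
    rw [List.getElem?_eq_none (by omega)] at h2
    exact Option.some_ne_none _ h2.symm
  obtain ⟨x, y, hw⟩ := windows B i 3 (by omega) (by omega)
  have e0 := hw 0 (by omega)
  have e1 := hw 1 (by omega)
  have e2 := hw 2 (by omega)
  simp only [Nat.add_zero] at e0
  rw [e0] at h0; rw [e1] at h1; rw [e2] at h2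
  exact d_no_aaa x y (i % 15) (Nat.mod_lt _ (by omega)) ⟨h0, h1, h2⟩

lemma no_small_period (B : List Bool) (s p : ℕ) (hp1 : 1 ≤ p) (hp2 : p < 3)
    (hs : s + 14 ≤ (phiStr B).length)
    (hper : ∀ j, j + p < 14 → (phiStr B)[s + j]? = (phiStr B)[s + (j + p)]?) : False := by
  obtain ⟨x, y, hw⟩ := windows B s 14 (by omega) (by omega)
  obtain ⟨j, hj, hjp, hne⟩ := d_per x y (s % 15) (Nat.mod_lt _ (by omega)) p hp2 hp1
  apply hne
  have h := hper j hjp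
  rw [hw j hj, hw (j + p) hjp] at h
  exact h

lemma getL (B : List Bool) (i r : ℕ) (cc : Bool) (hi : i < (phiStr B).length)
    (hr : i % 15 = r) (hall : ∀ x y : Bool, (pairP x y)[r]? = some cc) :
    (phiStr B)[i]? = some cc := by
  obtain ⟨x, y, hw⟩ := windows B i 1 (by omega) (by omega)
  have e := hw 0 (by omega)
  simp only [Nat.add_zero] at e
  rw [e, hr]
  exact hall x y

set_option maxHeartbeats 1000000 in
/-- Let `B` be a binary de Bruijn sequence of order `k ≥ 1` and `T = φ(B)`.
Any string `T'` of the same length as `T` that differs from `T` in exactly one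
position is superprimitive. -/
theorem stmt19 (k : ℕ) (hk : 1 ≤ k) (B : List Bool) (hB : DeBruijn k B)
    (T' : List Bool) (hlen : T'.length = (phiStr B).length)
    (hdiff : ∃! i, i < (phiStr B).length ∧ T'[i]? ≠ (phiStr B)[i]?) :
    Superprimitive T' := by
  intro hsp
  obtain ⟨C, ⟨-, hcov⟩, hlt⟩ := hsp
  have hm : 2 ≤ B.length := by
    have h1 := hB.1
    have h2 : 2 ≤ 2 ^ k := by
      calc 2 = 2 ^ 1 := rfl
        _ ≤ 2 ^ k := Nat.pow_le_pow_right (by omega) hk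
    omega
  have hn : (phiStr B).length = 15 * B.length := phiStr_length B
  have hn30 : 30 ≤ (phiStr B).length := by omega
  obtain ⟨q, ⟨hqlt, hqne⟩, huq⟩ := hdiff
  have h1 : ∀ i, i ≠ q → T'[i]? = (phiStr B)[i]? := by
    intro i hi
    by_cases hin : i < (phiStr B).length
    · by_contra hne
      exact hi (huq i ⟨hin, hne⟩)
    · rw [List.getElem?_eq_none (show T'.length ≤ i by omega),
        List.getElem?_eq_none (show (phiStr B).length ≤ i by omega)]
  obtain ⟨c, hc⟩ : ∃ c, (phiStr B)[q]? = some c := ⟨_, List.getElem?_eq_getElem hqlt⟩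
  obtain ⟨c', hc'⟩ : ∃ c', T'[q]? = some c' :=
    ⟨_, List.getElem?_eq_getElem (show q < T'.length by omega)⟩
  have hcc : c' = !c := by
    have hne' : c' ≠ c := fun h => hqne (by rw [hc', hc, h])
    revert hne'
    cases c <;> cases c' <;> decide
  -- cover basics
  have occElem : ∀ {i : ℕ}, OccursAt C T' i → ∀ j, j < C.length → T'[i + j]? = C[j]? := by
    intro i occ j hj
    conv_rhs => rw [← occ.2]
    rw [List.getElem?_take, if_pos hj, List.getElem?_drop]
  obtain ⟨i0, occ0, hi0, hi0'⟩ := hcov 0 (by omega)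
  have hC1 : 1 ≤ C.length := by omega
  have hi00 : i0 = 0 := by omega
  subst hi00
  have pre : ∀ j, j < C.length → T'[j]? = C[j]? := by
    intro j hj
    have := occElem occ0 j hj
    simpa using this
  set π : ℕ := (phiStr B).length - C.length with hπdef
  have hπ1 : 1 ≤ π := by omega
  have suf : ∀ j, j < C.length → T'[π + j]? = C[j]? := by
    obtain ⟨i, occ, hi1, hi2⟩ := hcov (T'.length - 1) (by omega)
    have ho := occ.1
    have hie : i = π := by omega
    subst hie
    exact occElem occ
  have hperT' : ∀ j, j + π < T'.length → T'[j]? = T'[j + π]? := by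
    intro j hj
    have hjC : j < C.length := by omega
    rw [pre j hjC, Nat.add_comm j π, ← suf j hjC]
  have periodContra : π ≤ 2 → False := by
    intro hπ2
    obtain ⟨s, hs14, hsq⟩ : ∃ s, s + 14 ≤ (phiStr B).length ∧ ∀ j, j < 14 → s + j ≠ q := by
      rcases Nat.lt_or_ge q 14 with h | h
      · exact ⟨(phiStr B).length - 14, by omega, fun j hj => by omega⟩
      · exact ⟨0, by omega, fun j hj => by omega⟩
    apply no_small_period B s π hπ1 (by omega) hs14
    intro j hj
    have e1 := (h1 (s + j) (hsq j (by omega))).symm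
    have e2 := h1 (s + (j + π)) (hsq (j + π) (by omega))
    rw [e1, ← e2, show s + (j + π) = (s + j) + π by omega]
    exact hperT' (s + j) (by omega)
  -- letters
  have Ta0 : (phiStr B)[0]? = some la := getL B 0 0 la (by omega) (by omega) (by decide)
  have Ta1 : (phiStr B)[1]? = some lb := getL B 1 1 lb (by omega) (by omega) (by decide)
  have Ta2 : (phiStr B)[2]? = some la := getL B 2 2 la (by omega) (by omega) (by decide)
  have Ta3 : (phiStr B)[3]? = some lb := getL B 3 3 lb (by omega) (by omega) (by decide)
  have Tan1 : (phiStr B)[(phiStr B).length - 1]? = some la :=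
    getL B _ 14 la (by omega) (by omega) (by decide)
  have Tbn2 : (phiStr B)[(phiStr B).length - 2]? = some lb :=
    getL B _ 13 lb (by omega) (by omega) (by decide)
  have Tan3 : (phiStr B)[(phiStr B).length - 3]? = some la :=
    getL B _ 12 la (by omega) (by omega) (by decide)
  cases c with
  | false =>
    -- T[q] = b flipped to a ; T' has run aaa around q
    have hTq : (phiStr B)[q]? = some lb := hc
    have hT'q : T'[q]? = some la := by rw [hc', hcc]; rfl
    have hq0 : q ≠ 0 := by
      intro h
      rw [h] at hTq
      exact clash _ Ta0 hTq
    have hqn : q ≠ (phiStr B).length - 1 := by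
      intro h
      rw [h] at hTq
      exact clash _ Tan1 hTq
    have hq2 : q + 1 < (phiStr B).length := by omega
    have hTqm : (phiStr B)[q - 1]? = some la := by
      obtain ⟨cm, hcm⟩ : ∃ cm, (phiStr B)[q - 1]? = some cm :=
        ⟨_, List.getElem?_eq_getElem (by omega)⟩
      cases cm
      · exact (no_bb B (q - 1) hcm (by rw [show q - 1 + 1 = q by omega]; exact hTq)).elim
      · exact hcm
    have hTqp : (phiStr B)[q + 1]? = some la := by
      obtain ⟨cp, hcp⟩ : ∃ cp, (phiStr B)[q + 1]? = some cp :=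
        ⟨_, List.getElem?_eq_getElem (by omega)⟩
      cases cp
      · exact (no_bb B q hTq hcp).elim
      · exact hcp
    have hT'qm : T'[q - 1]? = some la := (h1 _ (by omega)).trans hTqm
    have hT'qp : T'[q + 1]? = some la := (h1 _ (by omega)).trans hTqp
    have huniq3 : ∀ p, T'[p]? = some la → T'[p + 1]? = some la → T'[p + 2]? = some la →
        (p ≤ q ∧ q ≤ p + 2) := by
      intro p u0 u1 u2
      by_contra hcon
      have hne : p ≠ q ∧ p + 1 ≠ q ∧ p + 2 ≠ q := by omega
      exact no_aaa B p ((h1 p hne.1).symm.trans u0) ((h1 (p + 1) hne.2.1).symm.trans u1)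
        ((h1 (p + 2) hne.2.2).symm.trans u2)
    rcases Nat.lt_or_ge C.length 2 with hC2 | hC2
    · -- |C| = 1
      have hCa : C[0]? = some la := (pre 0 (by omega)).symm.trans ((h1 0 (by omega)).trans Ta0)
      obtain ⟨p, hpq, hpn, hpb⟩ : ∃ p, p ≠ q ∧ p < (phiStr B).length ∧
          (phiStr B)[p]? = some lb := by
        rcases eq_or_ne q 1 with h | h
        · exact ⟨3, by omega, by omega, Ta3⟩
        · exact ⟨1, fun hh => h hh.symm, by omega, Ta1⟩
      obtain ⟨i, occ, hip, hip'⟩ := hcov p (by omega)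
      have hie : i = p := by omega
      subst hie
      have hoc := occElem occ 0 (by omega)
      simp only [Nat.add_zero] at hoc
      exact clash _ (hoc.trans hCa) ((h1 _ hpq).trans hpb)
    · by_cases hf : ∃ f, f + 2 < C.length ∧ C[f]? = some la ∧ C[f+1]? = some la ∧
          C[f+2]? = some la
      · obtain ⟨f, hfl, f0, f1, f2⟩ := hf
        have hpre := huniq3 f ((pre f (by omega)).trans f0) ((pre (f + 1) (by omega)).trans f1)
          ((pre (f + 2) (by omega)).trans f2)
        have hsufu := huniq3 (π + f) ((suf f (by omega)).trans f0)
          (by rw [show π + f + 1 = π + (f + 1) by omega]; exact (suf (f + 1) (by omega)).trans f1)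
          (by rw [show π + f + 2 = π + (f + 2) by omega]; exact (suf (f + 2) (by omega)).trans f2)
        exact periodContra (by omega)
      · obtain ⟨i, occ, hiq, hiq'⟩ := hcov q (by omega)
        have hkey : i = q ∨ i + C.length = q + 1 := by
          by_contra hcon
          apply hf
          refine ⟨q - 1 - i, by omega, ?_, ?_, ?_⟩
          · have t := occElem occ (q - 1 - i) (by omega)
            rw [show i + (q - 1 - i) = q - 1 by omega] at t
            exact t.symm.trans hT'qm
          · have t := occElem occ (q - 1 - i + 1) (by omega)
            rw [show i + (q - 1 - i + 1) = q by omega] at t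
            exact t.symm.trans hT'q
          · have t := occElem occ (q - 1 - i + 2) (by omega)
            rw [show i + (q - 1 - i + 2) = q + 1 by omega] at t
            exact t.symm.trans hT'qp
        rcases hkey with hieq | hieq
        · subst hieq
          have hc1 : C[1]? = some la := by
            have t := occElem occ 1 (by omega)
            exact t.symm.trans hT'qp
          rcases eq_or_ne i 1 with hq1' | hq1'
          · by_cases hl3 : 3 ≤ C.length
            · apply hf
              refine ⟨0, by omega, ?_, ?_, ?_⟩
              · exact (pre 0 (by omega)).symm.trans ((h1 0 (by omega)).trans Ta0)
              · exact hc1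
              · exact (pre 2 (by omega)).symm.trans ((h1 2 (by omega)).trans Ta2)
            · obtain ⟨i3, occ3, h3a, h3b⟩ := hcov 3 (by omega)
              have t := occElem occ3 (3 - i3) (by omega)
              rw [show i3 + (3 - i3) = 3 by omega] at t
              have hCj : C[3 - i3]? = some la := by
                rcases (show 3 - i3 = 0 ∨ 3 - i3 = 1 by omega) with h | h
                · rw [h]
                  exact (pre 0 (by omega)).symm.trans ((h1 0 (by omega)).trans Ta0)
                · rw [h]
                  exact hc1
              exact clash _ (t.trans hCj) ((h1 3 (by omega)).trans Ta3)
          · exact clash _ ((pre 1 (by omega)).trans hc1) ((h1 1 (by omega)).trans Ta1)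
        · have hql : C[C.length - 1]? = some la := by
            have t := occElem occ (C.length - 1) (by omega)
            rw [show i + (C.length - 1) = q by omega] at t
            exact t.symm.trans hT'q
          have hql2 : C[C.length - 2]? = some la := by
            have t := occElem occ (C.length - 2) (by omega)
            rw [show i + (C.length - 2) = q - 1 by omega] at t
            exact t.symm.trans hT'qm
          have hTn2 : T'[(phiStr B).length - 2]? = some la := by
            have t := suf (C.length - 2) (by omega)
            rw [show π + (C.length - 2) = (phiStr B).length - 2 by omega] at t
            exact t.trans hql2
          rcases eq_or_ne q ((phiStr B).length - 2) with hqe | hqe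
          · by_cases hl3 : 3 ≤ C.length
            · apply hf
              refine ⟨C.length - 3, by omega, ?_, ?_, ?_⟩
              · have t := suf (C.length - 3) (by omega)
                rw [show π + (C.length - 3) = (phiStr B).length - 3 by omega] at t
                exact t.symm.trans ((h1 _ (by omega)).trans Tan3)
              · rw [show C.length - 3 + 1 = C.length - 2 by omega]
                exact hql2
              · rw [show C.length - 3 + 2 = C.length - 1 by omega]
                exact hql
            · obtain ⟨i1, occ1, g1, g2⟩ := hcov 1 (by omega)
              have t := occElem occ1 (1 - i1) (by omega)
              rw [show i1 + (1 - i1) = 1 by omega] at t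
              have hCj : C[1 - i1]? = some la := by
                rcases (show 1 - i1 = 0 ∨ 1 - i1 = 1 by omega) with h | h
                · rw [h, show (0 : ℕ) = C.length - 2 by omega]
                  exact hql2
                · rw [h, show (1 : ℕ) = C.length - 1 by omega]
                  exact hql
              exact clash _ (t.trans hCj) ((h1 1 (by omega)).trans Ta1)
          · exact clash _ hTn2 ((h1 _ (by omega)).trans Tbn2)
  | true =>
    -- T[q] = a flipped to b ; T' has bb at q-1 or q
    have hTq : (phiStr B)[q]? = some la := hc
    have hT'q : T'[q]? = some lb := by rw [hc', hcc]; rfl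
    have huniq2 : ∀ p, T'[p]? = some lb → T'[p + 1]? = some lb → (p ≤ q ∧ q ≤ p + 1) := by
      intro p u0 u1
      by_contra hcon
      have hne : p ≠ q ∧ p + 1 ≠ q := by omega
      exact no_bb B p ((h1 p hne.1).symm.trans u0) ((h1 (p + 1) hne.2).symm.trans u1)
    obtain ⟨p0, hp0q, hp0b, hp0b', hp0n⟩ : ∃ p0, (p0 = q ∨ p0 + 1 = q) ∧
        T'[p0]? = some lb ∧ T'[p0 + 1]? = some lb ∧ p0 + 1 < (phiStr B).length := by
      rcases eq_or_ne q 0 with hq0 | hq0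
      · refine ⟨0, Or.inl hq0.symm, by rw [← hq0]; exact hT'q, ?_, by omega⟩
        have : T'[0 + 1]? = (phiStr B)[0 + 1]? := h1 (0 + 1) (by omega)
        simpa using this.trans (by simpa using Ta1)
      · obtain ⟨cm, hcm⟩ : ∃ cm, (phiStr B)[q - 1]? = some cm :=
          ⟨_, List.getElem?_eq_getElem (by omega)⟩
        cases cm with
        | false =>
          refine ⟨q - 1, Or.inr (by omega), (h1 (q - 1) (by omega)).trans hcm, ?_, by omega⟩
          rw [show q - 1 + 1 = q by omega]
          exact hT'q
        | true =>
          have hqn : q ≠ (phiStr B).length - 1 := by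
            intro he
            exact clash _ hcm
              (by rw [show q - 1 = (phiStr B).length - 2 by omega]; exact Tbn2)
          have hq1n : q + 1 < (phiStr B).length := by omega
          obtain ⟨cp, hcp⟩ : ∃ cp, (phiStr B)[q + 1]? = some cp :=
            ⟨_, List.getElem?_eq_getElem (by omega)⟩
          cases cp with
          | true =>
            exact (no_aaa B (q - 1) hcm (by rw [show q - 1 + 1 = q by omega]; exact hTq)
              (by rw [show q - 1 + 2 = q + 1 by omega]; exact hcp)).elim
          | false =>
            exact ⟨q, Or.inl rfl, hT'q, (h1 (q + 1) (by omega)).trans hcp, by omega⟩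
    rcases Nat.lt_or_ge C.length 2 with hC2 | hC2
    · -- |C| = 1
      have hC0 : C[0]? = T'[0]? := (pre 0 (by omega)).symm
      rcases eq_or_ne q 0 with hq0 | hq0
      · obtain ⟨i2, occ2, g1, g2⟩ := hcov 2 (by omega)
        have hie : i2 = 2 := by omega
        subst hie
        have t := occElem occ2 0 (by omega)
        simp only [Nat.add_zero] at t
        exact clash _ ((h1 2 (by omega)).trans Ta2)
          (t.trans (hC0.trans (by rw [← hq0]; exact hT'q)))
      · obtain ⟨ip, occp, g1, g2⟩ := hcov p0 (by omega)
        have hie : ip = p0 := by omega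
        subst hie
        have t := occElem occp 0 (by omega)
        simp only [Nat.add_zero] at t
        exact clash _ (t.trans (hC0.trans ((h1 0 (fun hh => hq0 hh.symm)).trans Ta0))) hp0b
    · by_cases hf : ∃ f, f + 1 < C.length ∧ C[f]? = some lb ∧ C[f+1]? = some lb
      · obtain ⟨f, hfl, f0, f1⟩ := hf
        have hpre := huniq2 f ((pre f (by omega)).trans f0) ((pre (f + 1) (by omega)).trans f1)
        have hsufu := huniq2 (π + f) ((suf f (by omega)).trans f0)
          (by rw [show π + f + 1 = π + (f + 1) by omega]; exact (suf (f + 1) (by omega)).trans f1)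
        exact periodContra (by omega)
      · rcases eq_or_ne q 0 with hq0 | hq0
        · have hC0 : C[0]? = some lb :=
            (pre 0 (by omega)).symm.trans (by rw [← hq0]; exact hT'q)
          obtain ⟨i1, occ1, g1, g2⟩ := hcov 1 (by omega)
          rcases (show i1 = 0 ∨ i1 = 1 by omega) with h | h
          · subst h
            apply hf
            refine ⟨0, by omega, hC0, ?_⟩
            have t := occElem occ1 1 (by omega)
            simp only [Nat.zero_add] at t
            exact t.symm.trans ((h1 1 (by omega)).trans Ta1)
          · subst h
            have t := occElem occ1 1 (by omega)
            rw [show (1 : ℕ) + 1 = 2 from rfl] at t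
            have h3 : C[1]? = T'[1]? := (pre 1 (by omega)).symm
            exact clash _ (t.symm.trans ((h1 2 (by omega)).trans Ta2))
              (h3.trans ((h1 1 (by omega)).trans Ta1))
        · have hC0 : C[0]? = some la :=
            (pre 0 (by omega)).symm.trans ((h1 0 (fun hh => hq0 hh.symm)).trans Ta0)
          obtain ⟨i1, occ1, g1, g2⟩ := hcov (p0 + 1) (by omega)
          rcases eq_or_ne i1 (p0 + 1) with h | h
          · subst h
            have t := occElem occ1 0 (by omega)
            simp only [Nat.add_zero] at t
            exact clash _ (t.trans hC0) hp0b'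
          · apply hf
            refine ⟨p0 - i1, by omega, ?_, ?_⟩
            · have t := occElem occ1 (p0 - i1) (by omega)
              rw [show i1 + (p0 - i1) = p0 by omega] at t
              exact t.symm.trans hp0b
            · have t := occElem occ1 (p0 - i1 + 1) (by omega)
              rw [show i1 + (p0 - i1 + 1) = p0 + 1 by omega] at t
              exact t.symm.trans hp0b'
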